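/- For every n ∈ ℕ, Σ_{k=0}^{2n} Σ_{j=0}^{n} ((−1/3)_k / k!) · C(k,j) · 2^{k−j} · C(3n−k, n) · C(2n−k, n−j) = 27^n · (2/9)_n (5/9)_n (8/9)_n / ((5/6)_n · (n!)²). (This expresses, in coefficient form, that the diagonal of (1−x−2y)^{1/3}/(1−x−y−z) equals ₃F₂([2/9, 5/9, 8/9], [5/6, 1], 27x).) -/

import Mathlib

open Finset Polynomial


noncomputable def Qb (x : ℚ) (m : ℕ) : ℚ := (descPochhammer ℚ m).eval x / m.factorial

lemma Qb_natCast (a m : ℕ) : Qb (a : ℚ) m = a.choose m := by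
  unfold Qb
  rw [descPochhammer_eval_eq_descFactorial]
  rcases le_or_gt m a with h | h
  · rw [Nat.descFactorial_eq_factorial_mul_choose]
    field_simp
    simp
  · rw [Nat.descFactorial_eq_zero_iff_lt.mpr h, Nat.choose_eq_zero_of_lt h]
    simp

-- polynomial extension: two polys agreeing on ℕ-casts are equal as functions
lemma poly_ext {p q : ℚ[X]} (h : ∀ a : ℕ, p.eval (a : ℚ) = q.eval (a : ℚ)) (x : ℚ) :
    p.eval x = q.eval x := by
  have hpq : p - q = 0 := by
    apply Polynomial.eq_zero_of_infinite_isRoot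
    have hsub : Set.range ((↑·) : ℕ → ℚ) ⊆ {x | (p - q).IsRoot x} := by
      rintro - ⟨a, rfl⟩
      simp [IsRoot, h a]
    exact (Set.infinite_range_of_injective (f := ((↑·) : ℕ → ℚ)) Nat.cast_injective).mono hsub
  have := congrArg (Polynomial.eval x) hpq
  simpa [sub_eq_zero] using this

lemma Qb_eval_poly (y : ℚ) (m j : ℕ) :
    Qb y m = ((C ((m.factorial : ℚ)⁻¹)) * descPochhammer ℚ m).eval y := by
  simp [Qb, div_eq_inv_mul, mul_comm]

lemma qb_vandermonde (m : ℕ) (x y : ℚ) :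
    ∑ j ∈ range (m+1), Qb x j * Qb y (m - j) = Qb (x + y) m := by
  -- polynomials in second variable, for fixed first variable x
  have keyP : ∀ x : ℚ,
      (∀ a : ℕ, ∑ j ∈ range (m+1), Qb x j * Qb (a : ℚ) (m - j) = Qb (x + a) m) →
      ∀ y : ℚ, ∑ j ∈ range (m+1), Qb x j * Qb y (m - j) = Qb (x + y) m := by
    intro x h y
    have := poly_ext (p := ∑ j ∈ range (m+1),
        C (Qb x j) * (C (((m-j).factorial : ℚ)⁻¹) * descPochhammer ℚ (m-j)))
      (q := (C ((m.factorial : ℚ)⁻¹) * descPochhammer ℚ m).comp (X + C x)) ?_ y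
    · simpa [eval_finset_sum, Qb, div_eq_inv_mul, eval_comp, add_comm, mul_assoc] using this
    · intro a
      have ha := h a
      simpa [eval_finset_sum, Qb, div_eq_inv_mul, eval_comp, add_comm, mul_assoc] using ha
  -- for (nat, nat) via Nat.add_choose_eq
  have hnat : ∀ a b : ℕ, ∑ j ∈ range (m+1), Qb (a:ℚ) j * Qb (b:ℚ) (m - j) = Qb ((a:ℚ) + b) m := by
    intro a b
    have hv := Nat.add_choose_eq a b m
    have hv2 : ((a+b).choose m : ℚ) = ∑ j ∈ range (m+1), (a.choose j : ℚ) * (b.choose (m-j) : ℚ) := by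
      rw [hv, Finset.Nat.sum_antidiagonal_eq_sum_range_succ (f := fun i j => a.choose i * b.choose j)]
      push_cast
      ring
    calc ∑ j ∈ range (m+1), Qb (a:ℚ) j * Qb (b:ℚ) (m - j)
        = ∑ j ∈ range (m+1), (a.choose j : ℚ) * (b.choose (m-j) : ℚ) := by
          refine Finset.sum_congr rfl fun j _ => ?_
          rw [Qb_natCast, Qb_natCast]
      _ = ((a+b).choose m : ℚ) := hv2.symm
      _ = Qb ((a:ℚ) + b) m := by rw [← Nat.cast_add, Qb_natCast]
  -- extend second variable for fixed nat first
  have hnatq : ∀ (a : ℕ) (y : ℚ),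
      ∑ j ∈ range (m+1), Qb (a:ℚ) j * Qb y (m - j) = Qb ((a:ℚ) + y) m :=
    fun a => keyP (a:ℚ) (hnat a)
  -- extend first variable: polynomials in x, fixed y
  have := poly_ext (p := ∑ j ∈ range (m+1),
      C (Qb y (m-j)) * (C ((j.factorial : ℚ)⁻¹) * descPochhammer ℚ j))
    (q := (C ((m.factorial : ℚ)⁻¹) * descPochhammer ℚ m).comp (X + C y)) ?_ x
  · simpa [eval_finset_sum, Qb, div_eq_inv_mul, eval_comp, mul_comm, mul_assoc, mul_left_comm]
      using this
  · intro a
    have ha := hnatq a y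
    simpa [eval_finset_sum, Qb, div_eq_inv_mul, eval_comp, mul_comm, mul_assoc, mul_left_comm]
      using ha

-- reflection
lemma Qb_reflect (x : ℚ) (m : ℕ) : Qb x m = (-1)^m * Qb ((m : ℚ) - 1 - x) m := by
  unfold Qb
  rw [descPochhammer_eval_eq_ascPochhammer ℚ ((m:ℚ) - 1 - x)]
  have h : ((m:ℚ) - 1 - x - m + 1) = -x := by ring
  rw [h, ascPochhammer_eval_neg_eq_descPochhammer]
  rw [mul_div_assoc, ← mul_assoc, ← mul_pow]
  norm_num

lemma neg_one_pow_Qb_neg (x : ℚ) (m : ℕ) :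
    (-1)^m * Qb (-x) m = (ascPochhammer ℚ m).eval x / m.factorial := by
  unfold Qb
  rw [show (x : ℚ) = -(-x) by ring, ascPochhammer_eval_neg_eq_descPochhammer]
  rw [show (-(-x) : ℚ) = x by ring]
  ring

noncomputable def cc (k : ℕ) : ℚ := (ascPochhammer ℚ k).eval (-(1/3)) / k.factorial

lemma keyterm (n i j : ℕ) (hi : i ≤ n) (hj : j ≤ n) :
    cc (i+j) * (((i+j).choose j : ℕ) : ℚ) * (2:ℚ)^((i+j) - j) * (((3*n - (i+j)).choose n : ℕ) : ℚ)
      * (((2*n - (i+j)).choose (n-j) : ℕ) : ℚ)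
    = (-1:ℚ)^n * (2^i * cc i * (((2*n-i).choose n : ℕ) : ℚ))
        * (Qb (1/3 - (i:ℚ)) j * Qb ((i:ℚ) - 2*(n:ℚ) - 1) (n-j)) := by
  have e0 : (i+j) - j = i := by omega
  rw [e0]
  have fne : ∀ m : ℕ, ((m.factorial : ℕ) : ℚ) ≠ 0 :=
    fun m => Nat.cast_ne_zero.mpr (Nat.factorial_ne_zero m)
  -- (a)
  have ha : cc (i+j) * (((i+j).choose j : ℕ) : ℚ) = cc i * (-1)^j * Qb (1/3 - (i:ℚ)) j := by
    have hmul := congrArg (Polynomial.eval (-(1/3) : ℚ)) (ascPochhammer_mul (S := ℚ) i j)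
    rw [eval_mul, eval_comp] at hmul
    simp only [eval_add, eval_X, eval_natCast] at hmul
    have hneg : (ascPochhammer ℚ j).eval (-(1/3) + (i:ℚ))
        = (-1)^j * (descPochhammer ℚ j).eval (1/3 - (i:ℚ)) := by
      have h := ascPochhammer_eval_neg_eq_descPochhammer (R := ℚ) ((1:ℚ)/3 - (i:ℚ)) j
      rw [show -((1:ℚ)/3 - (i:ℚ)) = -(1/3) + (i:ℚ) by ring] at h
      exact h
    have hch : (((i+j).choose j : ℕ) : ℚ)
        = ((i+j).factorial : ℚ) / ((j.factorial : ℚ) * (i.factorial : ℚ)) := by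
      rw [Nat.cast_choose ℚ (Nat.le_add_left j i), Nat.add_sub_cancel]
    rw [hch]
    unfold cc Qb
    rw [← hmul, hneg]
    field_simp
  -- (b)
  have hb : (((3*n - (i+j)).choose n : ℕ) : ℚ) * (((2*n - (i+j)).choose (n-j) : ℕ) : ℚ)
      = (((2*n-i).choose n : ℕ) : ℚ) * (((3*n - (i+j)).choose (n-j) : ℕ) : ℚ) := by
    have k1 : n ≤ 3*n - (i+j) := by omega
    have k2 : n - j ≤ 2*n - (i+j) := by omega
    have k3 : n ≤ 2*n - i := by omega
    have k4 : n - j ≤ 3*n - (i+j) := by omega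
    rw [Nat.cast_choose ℚ k1, Nat.cast_choose ℚ k2, Nat.cast_choose ℚ k3, Nat.cast_choose ℚ k4]
    rw [show 3*n - (i+j) - n = 2*n - (i+j) by omega,
        show 2*n - (i+j) - (n - j) = n - i by omega,
        show 2*n - i - n = n - i by omega,
        show 3*n - (i+j) - (n - j) = 2*n - i by omega]
    field_simp
  -- (c)
  have e : ((n-j : ℕ):ℚ) - 1 - ((3*n-(i+j) : ℕ):ℚ) = (i:ℚ) - 2*(n:ℚ) - 1 := by
    rw [Nat.cast_sub hj, Nat.cast_sub (by omega : i+j ≤ 3*n)]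
    push_cast
    ring
  have hc : (((3*n - (i+j)).choose (n-j) : ℕ) : ℚ)
      = (-1:ℚ)^(n-j) * Qb ((i:ℚ) - 2*(n:ℚ) - 1) (n-j) := by
    rw [← Qb_natCast (3*n - (i+j)) (n-j), Qb_reflect, e]
  have hsign : (-1:ℚ)^j * (-1:ℚ)^(n-j) = (-1:ℚ)^n := by
    rw [← pow_add]
    congr 1
    omega
  calc cc (i+j) * (((i+j).choose j : ℕ) : ℚ) * (2:ℚ)^i * (((3*n - (i+j)).choose n : ℕ) : ℚ)
      * (((2*n - (i+j)).choose (n-j) : ℕ) : ℚ)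
      = (cc (i+j) * (((i+j).choose j : ℕ) : ℚ)) * ((2:ℚ)^i *
          ((((3*n - (i+j)).choose n : ℕ) : ℚ) * (((2*n - (i+j)).choose (n-j) : ℕ) : ℚ))) := by
        ring
    _ = (cc i * (-1)^j * Qb (1/3 - (i:ℚ)) j) * ((2:ℚ)^i *
          ((((2*n-i).choose n : ℕ) : ℚ) * ((-1:ℚ)^(n-j) * Qb ((i:ℚ) - 2*(n:ℚ) - 1) (n-j)))) := by
        rw [ha, hb, hc]
    _ = (-1:ℚ)^n * (2^i * cc i * (((2*n-i).choose n : ℕ) : ℚ))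
        * (Qb (1/3 - (i:ℚ)) j * Qb ((i:ℚ) - 2*(n:ℚ) - 1) (n-j)) := by
        linear_combination (cc i * Qb (1/3 - (i:ℚ)) j * 2^i * (((2*n-i).choose n : ℕ) : ℚ)
          * Qb ((i:ℚ) - 2*(n:ℚ) - 1) (n-j)) * hsign

noncomputable def tt (n i : ℕ) : ℚ := 2^i * cc i * Qb (2*(n:ℚ) - i) n

noncomputable def Gf (n i : ℕ) : ℚ := -3 * i * 2^i * cc i * Qb (2*(n:ℚ) + 1 - i) n

lemma cc_succ (k : ℕ) : ((k:ℚ) + 1) * cc (k+1) = ((k:ℚ) - 1/3) * cc k := by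
  unfold cc
  rw [ascPochhammer_succ_eval, Nat.factorial_succ]
  have h1 : (k.factorial : ℚ) ≠ 0 := Nat.cast_ne_zero.mpr (Nat.factorial_ne_zero k)
  have h2 : ((k:ℚ) + 1) ≠ 0 := by positivity
  push_cast
  field_simp
  ring

lemma desc_succ_left_eval (n : ℕ) (z : ℚ) :
    (descPochhammer ℚ (n+1)).eval z = z * (descPochhammer ℚ n).eval (z - 1) := by
  rw [descPochhammer_succ_left]
  simp [eval_comp]

-- key per-term certificate identity
lemma cert (n i : ℕ) :
    3*((n:ℚ)+1) * tt (n+1) i - 4*(3*(n:ℚ)+1) * tt n i = Gf n (i+1) - Gf n i := by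
  unfold tt Gf Qb
  have h1 : (n.factorial : ℚ) ≠ 0 := Nat.cast_ne_zero.mpr (Nat.factorial_ne_zero n)
  set y : ℚ := 2*(n:ℚ) + 1 - i with hy
  have e1 : 2*((n:ℚ)+1) - i = y + 1 := by rw [hy]; push_cast; ring
  have e2 : 2*(n:ℚ) - i = y - 1 := by rw [hy]; ring
  have e3 : 2*(n:ℚ) + 1 - ((i:ℚ)+1) = y - 1 := by rw [hy]; ring
  push_cast
  rw [e1, e2, e3]
  set D0 : ℚ := (descPochhammer ℚ n).eval y with hD0
  set D1 : ℚ := (descPochhammer ℚ n).eval (y - 1) with hD1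
  have hup : (descPochhammer ℚ (n+1)).eval (y+1) = (y+1) * D0 := by
    rw [desc_succ_left_eval]; simp [hD0]
  have hrel : y * D1 = D0 * (y - n) := by
    have a1 : (descPochhammer ℚ (n+1)).eval y = y * D1 := by
      rw [desc_succ_left_eval]
    have a2 : (descPochhammer ℚ (n+1)).eval y = D0 * (y - n) := by
      rw [descPochhammer_succ_eval]
    rw [← a1, a2]
  have hcs := cc_succ i
  rw [hup, Nat.factorial_succ]
  have h2 : ((n:ℚ)+1) ≠ 0 := by positivity
  push_cast
  field_simp
  linear_combination (6*2^i*D1) * hcs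
    - (6*2^i*cc i) * hrel - (3*2^i*cc i*D0) * hy

lemma Gf_zero (n : ℕ) : Gf n 0 = 0 := by simp [Gf]

lemma Qb_nat_pred_zero (n : ℕ) : (n:ℚ) * Qb ((n:ℚ) - 1) n = 0 := by
  cases n with
  | zero => simp
  | succ m =>
    have : ((m+1:ℕ):ℚ) - 1 = (m:ℚ) := by push_cast; ring
    rw [this, Qb_natCast, Nat.choose_eq_zero_of_lt (Nat.lt_succ_self m)]
    simp

lemma boundary (n : ℕ) : 4*(3*(n:ℚ)+1) * tt n (n+1) + Gf n (n+2) = 0 := by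
  unfold tt Gf
  have e1 : 2*(n:ℚ) - ((n:ℕ):ℚ) - 1 = (n:ℚ) - 1 := by ring
  have hcs := cc_succ (n+1)
  have hz := Qb_nat_pred_zero n
  have e2 : 2*(n:ℚ) - ((n+1:ℕ):ℚ) = (n:ℚ) - 1 := by push_cast; ring
  have e3 : 2*(n:ℚ) + 1 - ((n+2:ℕ):ℚ) = (n:ℚ) - 1 := by push_cast; ring
  rw [e2, e3]
  push_cast at hcs ⊢
  have expand : (4*(3*(n:ℚ)+1) * (2^(n+1) * cc (n+1)) + (-3) * ((n:ℚ)+2) * 2^(n+2) * cc (n+2))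
      = 6*(n:ℚ) * (2^(n+1) * cc (n+1)) - 6 * 2^(n+1) * (((n:ℚ)+1+1) * cc (n+2) - (((n:ℚ)+1) - 1/3) * cc (n+1)) := by
    ring
  linear_combination Qb ((n:ℚ)-1) n * expand + (6 * 2^(n+1) * cc (n+1)) * mul_comm ((n:ℚ)) (Qb ((n:ℚ)-1) n)
    + 6 * 2^(n+1) * cc (n+1) * hz - 6 * 2^(n+1) * Qb ((n:ℚ)-1) n * hcs

lemma claim2 (n : ℕ) :
    ∑ i ∈ range (n+1), tt n i = 4^n * (ascPochhammer ℚ n).eval (1/3) / n.factorial := by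
  induction n with
  | zero => simp [tt, cc, Qb]
  | succ n ih =>
    have hsum : ∑ i ∈ range (n+2), (3*((n:ℚ)+1) * tt (n+1) i - 4*(3*(n:ℚ)+1) * tt n i)
        = Gf n (n+2) - Gf n 0 := by
      rw [← Finset.sum_range_sub (Gf n) (n+2)]
      exact Finset.sum_congr rfl fun i _ => cert n i
    have h3 : 3*((n:ℚ)+1) * (∑ i ∈ range (n+2), tt (n+1) i)
        - 4*(3*(n:ℚ)+1) * (∑ i ∈ range (n+2), tt n i) = Gf n (n+2) - Gf n 0 := by
      rw [Finset.mul_sum, Finset.mul_sum, ← Finset.sum_sub_distrib]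
      exact hsum
    have h4 : ∑ i ∈ range (n+2), tt n i = (∑ i ∈ range (n+1), tt n i) + tt n (n+1) :=
      Finset.sum_range_succ _ _
    have h5 : 3*((n:ℚ)+1) * (∑ i ∈ range (n+2), tt (n+1) i)
        = 4*(3*(n:ℚ)+1) * (∑ i ∈ range (n+1), tt n i) := by
      linear_combination h3 + 4*(3*(n:ℚ)+1)*h4 + boundary n - Gf_zero n
    rw [ascPochhammer_succ_eval, Nat.factorial_succ]
    have h1 : (n.factorial : ℚ) ≠ 0 := Nat.cast_ne_zero.mpr (Nat.factorial_ne_zero n)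
    have h2 : ((n:ℚ)+1) ≠ 0 := by positivity
    rw [ih] at h5
    field_simp at h5
    push_cast
    field_simp
    linear_combination h5

lemma asc_pos (n : ℕ) (x : ℚ) (hx : 0 < x) : 0 < (ascPochhammer ℚ n).eval x := by
  induction n with
  | zero => simp
  | succ n ih =>
    rw [ascPochhammer_succ_eval]
    have : (0:ℚ) < x + n := by positivity
    positivity

lemma asc_shift2 (m : ℕ) (x : ℚ) :
    (ascPochhammer ℚ (2 + m)).eval x = x * (x+1) * (ascPochhammer ℚ m).eval (x + 2) := by
  have h := ascPochhammer_mul (S := ℚ) 2 m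
  have h2 := congrArg (Polynomial.eval x) h
  rw [eval_mul, eval_comp] at h2
  have e2 : (ascPochhammer ℚ 2).eval x = x * (x+1) := by
    rw [show (2:ℕ) = 1 + 1 from rfl, ascPochhammer_succ_eval]
    simp
  rw [← h2, e2]
  norm_num

lemma claim3 (n : ℕ) :
    (ascPochhammer ℚ n).eval (2*(n:ℚ) + 2/3) * (ascPochhammer ℚ n).eval (1/3) * 4^n
        * (ascPochhammer ℚ n).eval (5/6)
      = 27^n * (ascPochhammer ℚ n).eval (2/9) * (ascPochhammer ℚ n).eval (5/9)
        * (ascPochhammer ℚ n).eval (8/9) := by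
  induction n with
  | zero => norm_num
  | succ n ih =>
    have hden : ((2*(n:ℚ)+2/3)*(2*(n:ℚ)+5/3)) ≠ 0 := by positivity
    -- front/back splitting of (2n+2/3)_{n+3}
    have hfront : (ascPochhammer ℚ (2 + (n+1))).eval (2*(n:ℚ)+2/3)
        = (2*(n:ℚ)+2/3) * (2*(n:ℚ)+5/3) * (ascPochhammer ℚ (n+1)).eval (2*((n:ℚ)+1) + 2/3) := by
      rw [asc_shift2]
      ring_nf
    have hback : (ascPochhammer ℚ (2 + (n+1))).eval (2*(n:ℚ)+2/3)
        = (ascPochhammer ℚ n).eval (2*(n:ℚ)+2/3)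
          * (3*(n:ℚ)+2/3) * (3*(n:ℚ)+5/3) * (3*(n:ℚ)+8/3) := by
      rw [show 2 + (n+1) = ((n+1)+1)+1 by ring, ascPochhammer_succ_eval, ascPochhammer_succ_eval,
        ascPochhammer_succ_eval]
      push_cast
      ring
    have hK : ((2*(n:ℚ)+2/3)*(2*(n:ℚ)+5/3)) * (ascPochhammer ℚ (n+1)).eval (2*((n:ℚ)+1) + 2/3)
        = (ascPochhammer ℚ n).eval (2*(n:ℚ)+2/3)
          * (3*(n:ℚ)+2/3) * (3*(n:ℚ)+5/3) * (3*(n:ℚ)+8/3) := by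
      linear_combination hback - hfront
    push_cast
    rw [ascPochhammer_succ_eval n ((1:ℚ)/3), ascPochhammer_succ_eval n ((5:ℚ)/6),
      ascPochhammer_succ_eval n ((2:ℚ)/9), ascPochhammer_succ_eval n ((5:ℚ)/9),
      ascPochhammer_succ_eval n ((8:ℚ)/9)]
    apply mul_left_cancel₀ hden
    linear_combination ((ascPochhammer ℚ n).eval (1/3) * (1/3+(n:ℚ)) * 4^(n+1)
        * (ascPochhammer ℚ n).eval (5/6) * (5/6+(n:ℚ))) * hK
      + (4*((1:ℚ)/3+n)*(5/6+n)*(3*(n:ℚ)+2/3)*(3*(n:ℚ)+5/3)*(3*(n:ℚ)+8/3)) * ih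

/-- The diagonal of `(1-x-2y)^{1/3}/(1-x-y-z)` equals
`₃F₂([2/9, 5/9, 8/9], [5/6, 1], 27x)`, stated coefficient-wise. -/
theorem diagonal_1_x_2y_pow_one_third (n : ℕ) :
    ∑ k ∈ range (2 * n + 1), ∑ j ∈ range (n + 1),
        ((ascPochhammer ℚ k).eval (-(1 / 3)) / (Nat.factorial k : ℚ)) *
          (Nat.choose k j : ℚ) * (2 : ℚ) ^ (k - j) *
          (Nat.choose (3 * n - k) n : ℚ) * (Nat.choose (2 * n - k) (n - j) : ℚ) =
    27 ^ n * (ascPochhammer ℚ n).eval (2 / 9) * (ascPochhammer ℚ n).eval (5 / 9) *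
        (ascPochhammer ℚ n).eval (8 / 9) /
      ((ascPochhammer ℚ n).eval (5 / 6) * (Nat.factorial n : ℚ) ^ 2) := by
  classical
  set F : ℕ × ℕ → ℚ := fun p =>
    cc p.1 * (Nat.choose p.1 p.2 : ℚ) * (2 : ℚ) ^ (p.1 - p.2) *
      (Nat.choose (3 * n - p.1) n : ℚ) * (Nat.choose (2 * n - p.1) (n - p.2) : ℚ) with hF
  have A1 : ∑ k ∈ range (2 * n + 1), ∑ j ∈ range (n + 1),
        ((ascPochhammer ℚ k).eval (-(1 / 3)) / (Nat.factorial k : ℚ)) *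
          (Nat.choose k j : ℚ) * (2 : ℚ) ^ (k - j) *
          (Nat.choose (3 * n - k) n : ℚ) * (Nat.choose (2 * n - k) (n - j) : ℚ)
      = ∑ p ∈ range (2 * n + 1) ×ˢ range (n + 1), F p := by
    rw [Finset.sum_product]
    rfl
  rw [A1]
  set D := (range (2 * n + 1) ×ˢ range (n + 1)).filter
    (fun p : ℕ × ℕ => p.2 ≤ p.1 ∧ p.1 - p.2 ≤ n) with hD
  have A2 : ∑ p ∈ range (2 * n + 1) ×ˢ range (n + 1), F p = ∑ p ∈ D, F p := by
    refine (Finset.sum_subset (Finset.filter_subset _ _) ?_).symm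
    intro p hp hnp
    have key : ¬(p.2 ≤ p.1 ∧ p.1 - p.2 ≤ n) := fun hc => hnp (Finset.mem_filter.mpr ⟨hp, hc⟩)
    simp only [Finset.mem_product, Finset.mem_range] at hp
    by_cases hle : p.2 ≤ p.1
    · have hgt : n < p.1 - p.2 := by
        by_contra h
        exact key ⟨hle, by omega⟩
      have hz : (2 * n - p.1).choose (n - p.2) = 0 :=
        Nat.choose_eq_zero_of_lt (by omega)
      rw [hF]
      simp only [hz, Nat.cast_zero, mul_zero]
    · have hz : p.1.choose p.2 = 0 := Nat.choose_eq_zero_of_lt (by omega)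
      rw [hF]
      simp only [hz, Nat.cast_zero, mul_zero, zero_mul]
  rw [A2]
  have A3 : ∑ p ∈ D, F p = ∑ q ∈ range (n + 1) ×ˢ range (n + 1), F (q.1 + q.2, q.2) := by
    refine Finset.sum_nbij' (fun p => (p.1 - p.2, p.2)) (fun q => (q.1 + q.2, q.2)) ?_ ?_ ?_ ?_ ?_
    · intro p hp
      rw [hD, Finset.mem_filter] at hp
      simp only [Finset.mem_product, Finset.mem_range] at hp ⊢
      omega
    · intro q hq
      rw [hD, Finset.mem_filter]
      simp only [Finset.mem_product, Finset.mem_range] at hq ⊢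
      omega
    · intro p hp
      rw [hD, Finset.mem_filter] at hp
      have : p.1 - p.2 + p.2 = p.1 := by omega
      simp [this]
    · intro q hq
      simp
    · intro p hp
      rw [hD, Finset.mem_filter] at hp
      have : p.1 - p.2 + p.2 = p.1 := by omega
      simp [this]
  rw [A3, Finset.sum_product]
  have A5 : ∀ i ∈ range (n + 1), ∑ j ∈ range (n + 1), F (i + j, j)
      = (-1 : ℚ)^n * Qb (-2*(n:ℚ) - 2/3) n * tt n i := by
    intro i hi
    rw [Finset.mem_range] at hi
    have hi' : i ≤ n := by omega
    have hterm : ∀ j ∈ range (n + 1), F (i + j, j)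
        = ((-1 : ℚ)^n * (2^i * cc i * (((2*n-i).choose n : ℕ) : ℚ)))
          * (Qb (1/3 - (i:ℚ)) j * Qb ((i:ℚ) - 2*(n:ℚ) - 1) (n-j)) := by
      intro j hj
      rw [Finset.mem_range] at hj
      have hj' : j ≤ n := by omega
      rw [hF]
      have := keyterm n i j hi' hj'
      simp only at this ⊢
      rw [this]
    rw [Finset.sum_congr rfl hterm, ← Finset.mul_sum]
    have hvan : ∑ j ∈ range (n + 1), Qb (1/3 - (i:ℚ)) j * Qb ((i:ℚ) - 2*(n:ℚ) - 1) (n-j)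
        = Qb (-2*(n:ℚ) - 2/3) n := by
      rw [qb_vandermonde n (1/3 - (i:ℚ)) ((i:ℚ) - 2*(n:ℚ) - 1)]
      congr 1
      ring
    rw [hvan]
    have htt : tt n i = 2^i * cc i * (((2*n-i).choose n : ℕ) : ℚ) := by
      unfold tt
      rw [← Qb_natCast (2*n-i) n]
      congr 1
      rw [Nat.cast_sub (by omega : i ≤ 2*n)]
      push_cast
      ring
    rw [htt]
    ring
  rw [Finset.sum_congr rfl A5, ← Finset.mul_sum, claim2 n]
  have A7 : (-1 : ℚ)^n * Qb (-2*(n:ℚ) - 2/3) n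
      = (ascPochhammer ℚ n).eval (2*(n:ℚ) + 2/3) / n.factorial := by
    rw [show (-2*(n:ℚ) - 2/3) = -(2*(n:ℚ) + 2/3) by ring]
    exact neg_one_pow_Qb_neg (2*(n:ℚ) + 2/3) n
  rw [A7]
  have h56 : (ascPochhammer ℚ n).eval (5/6) ≠ 0 := (asc_pos n (5/6) (by norm_num)).ne'
  have hfn : ((n.factorial : ℕ) : ℚ) ≠ 0 := Nat.cast_ne_zero.mpr (Nat.factorial_ne_zero n)
  have h3 := claim3 n
  rw [div_mul_div_comm, div_eq_div_iff (by positivity) (by positivity)]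
  linear_combination ((n.factorial : ℚ))^2 * h3
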